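/- Let ν be a positive integer, set σ = νπ, and let K₂ be the bandlimited kernel defined by K₂(t) = (2σ/π) · (sin(σt)/(σt) − cos(σt)) / (σt)² for t ≠ 0 and K₂(0) = 2σ/(3π). Then for every real t with t ≠ 1 and t ≠ −1, ∫_{-1}^{1} K₂(t−s) sin(νπ s) ds = 2 sin(νπ t) / (νπ² (1 − t²)). -/

import Mathlib

open MeasureTheory Real Complex

/-- The kernel K₂ with removable singularity at 0. -/
noncomputable def K2 (σ : ℝ) (t : ℝ) : ℝ :=
  if t = 0 then 2 * σ / (3 * Real.pi)
  else (2 * σ / Real.pi) * (Real.sin (σ * t) / (σ * t) - Real.cos (σ * t)) / (σ * t) ^ 2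

open Filter Topology


lemma tendsto_of_abs_le_lin (g : ℝ → ℝ) (L c : ℝ)
    (h : ∀ w : ℝ, w ≠ 0 → |w| ≤ 1 → |g w - L| ≤ c * |w|) :
    Tendsto g (𝓝[≠] (0:ℝ)) (𝓝 L) := by
  rw [← tendsto_sub_nhds_zero_iff, tendsto_zero_iff_abs_tendsto_zero]
  have h1 : ∀ᶠ w in 𝓝[≠] (0:ℝ), |w| ≤ 1 := by
    apply eventually_nhdsWithin_of_eventually_nhds
    have := Metric.ball_mem_nhds (0:ℝ) one_pos
    filter_upwards [this] with w hw
    simp only [Metric.mem_ball, Real.dist_eq, sub_zero] at hw; exact le_of_lt hw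
  have h2 : ∀ᶠ w in 𝓝[≠] (0:ℝ), w ≠ 0 := self_mem_nhdsWithin
  have hub : Tendsto (fun w : ℝ => c * |w|) (𝓝[≠] (0:ℝ)) (𝓝 0) := by
    have : Tendsto (fun w : ℝ => c * |w|) (𝓝 (0:ℝ)) (𝓝 (c * |(0:ℝ)|)) :=
      (continuous_const.mul _root_.continuous_abs).tendsto 0
    simpa using this.mono_left nhdsWithin_le_nhds
  apply tendsto_of_tendsto_of_tendsto_of_le_of_le' tendsto_const_nhds hub
  · exact Eventually.of_forall fun w => abs_nonneg _
  · filter_upwards [h1, h2] with w hw1 hw2 using h w hw2 hw1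

lemma lim_sin3 : Tendsto (fun w : ℝ => (Real.sin w - w) / w ^ 3) (𝓝[≠] (0:ℝ)) (𝓝 (-(1/6))) := by
  apply tendsto_of_abs_le_lin _ _ (5/96)
  intro w hw hw1
  have hw3 : w ^ 3 ≠ 0 := pow_ne_zero _ hw
  have key : (Real.sin w - w) / w ^ 3 - (-(1/6)) = (Real.sin w - (w - w ^ 3 / 6)) / w ^ 3 := by
    field_simp; ring
  rw [key, abs_div, _root_.abs_pow]
  rw [div_le_iff₀ (by positivity)]
  calc |Real.sin w - (w - w ^ 3 / 6)| ≤ |w| ^ 5 / 100 := Real.sin_bound hw1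
    _ ≤ 5/96 * |w| * |w| ^ 3 := by
        have : |w| ^ 5 ≤ |w| ^ 4 := pow_le_pow_of_le_one (abs_nonneg w) hw1 (by norm_num)
        nlinarith [pow_nonneg (abs_nonneg w) 4]

lemma lim_cos2 : Tendsto (fun w : ℝ => (1 - Real.cos w) / w ^ 2) (𝓝[≠] (0:ℝ)) (𝓝 (1/2)) := by
  apply tendsto_of_abs_le_lin _ _ (5/96)
  intro w hw hw1
  have hw2 : w ^ 2 ≠ 0 := pow_ne_zero _ hw
  have key : (1 - Real.cos w) / w ^ 2 - 1/2 = -(Real.cos w - (1 - w ^ 2 / 2)) / w ^ 2 := by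
    field_simp; ring
  rw [key, abs_div, abs_neg, _root_.abs_pow]
  rw [div_le_iff₀ (by positivity)]
  calc |Real.cos w - (1 - w ^ 2 / 2)| ≤ |w| ^ 4 * (5/96) := Real.cos_bound hw1
    _ ≤ 5/96 * |w| * |w| ^ 2 := by
        have : |w| ^ 4 ≤ |w| ^ 3 := pow_le_pow_of_le_one (abs_nonneg w) hw1 (by norm_num)
        nlinarith [abs_nonneg w]



lemma lim_K2core : Tendsto (fun w : ℝ => (Real.sin w - w * Real.cos w) / w ^ 3)
    (𝓝[≠] (0:ℝ)) (𝓝 (1/3)) := by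
  have h := lim_sin3.add lim_cos2
  have he : ∀ᶠ w in 𝓝[≠] (0:ℝ),
      (Real.sin w - w) / w ^ 3 + (1 - Real.cos w) / w ^ 2
        = (Real.sin w - w * Real.cos w) / w ^ 3 := by
    filter_upwards [self_mem_nhdsWithin] with w hw
    have : w ≠ 0 := hw
    field_simp; ring
  have := h.congr' he
  norm_num at this ⊢
  exact this

lemma two_mul_tendsto : Tendsto (fun w : ℝ => 2 * w) (𝓝[≠] (0:ℝ)) (𝓝[≠] (0:ℝ)) := by
  rw [tendsto_nhdsWithin_iff]
  constructor
  · have : Tendsto (fun w : ℝ => 2 * w) (𝓝 (0:ℝ)) (𝓝 (2 * 0)) := (continuous_const.mul continuous_id).tendsto 0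
    simpa using this.mono_left nhdsWithin_le_nhds
  · filter_upwards [self_mem_nhdsWithin] with w hw
    simp only [Set.mem_compl_iff, Set.mem_singleton_iff]
    exact mul_ne_zero two_ne_zero hw

lemma lim_sincos : Tendsto (fun w : ℝ => (Real.sin w * Real.cos w - w) / w ^ 3)
    (𝓝[≠] (0:ℝ)) (𝓝 (-(2/3))) := by
  have h := (lim_sin3.comp two_mul_tendsto).const_mul (4:ℝ)
  have he : ∀ᶠ w in 𝓝[≠] (0:ℝ),
      4 * ((fun w : ℝ => (Real.sin w - w) / w ^ 3) ∘ (fun w : ℝ => 2 * w)) w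
        = (Real.sin w * Real.cos w - w) / w ^ 3 := by
    filter_upwards [self_mem_nhdsWithin] with w hw
    have hw' : w ≠ 0 := hw
    simp only [Function.comp_apply, Real.sin_two_mul]
    field_simp; ring
  have := h.congr' he
  norm_num at this ⊢
  exact this



lemma lim_sq : Tendsto (fun w : ℝ => (w ^ 2 - Real.sin w ^ 2) / w ^ 3) (𝓝[≠] (0:ℝ)) (𝓝 0) := by
  have h1 : Tendsto (fun w : ℝ => (w - Real.sin w) / w ^ 3) (𝓝[≠] (0:ℝ)) (𝓝 (1/6)) := by
    have := lim_sin3.neg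
    have he : ∀ᶠ w in 𝓝[≠] (0:ℝ), -((Real.sin w - w) / w ^ 3) = (w - Real.sin w) / w ^ 3 := by
      filter_upwards with w; ring
    have h := this.congr' he
    norm_num at h ⊢; exact h
  have h2 : Tendsto (fun w : ℝ => w + Real.sin w) (𝓝[≠] (0:ℝ)) (𝓝 0) := by
    have : Tendsto (fun w : ℝ => w + Real.sin w) (𝓝 (0:ℝ)) (𝓝 (0 + Real.sin 0)) :=
      (continuous_id.add Real.continuous_sin).tendsto 0
    simpa using this.mono_left nhdsWithin_le_nhds
  have h := h1.mul h2
  have he : ∀ᶠ w in 𝓝[≠] (0:ℝ),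
      (w - Real.sin w) / w ^ 3 * (w + Real.sin w) = (w ^ 2 - Real.sin w ^ 2) / w ^ 3 := by
    filter_upwards [self_mem_nhdsWithin] with w hw
    have hw' : w ≠ 0 := hw
    field_simp; ring
  have h' := h.congr' he
  simpa using h'

lemma lim_M (S C : ℝ) : Tendsto
    (fun u : ℝ => (S * (Real.sin u * Real.cos u - u) + C * (u ^ 2 - Real.sin u ^ 2)) / u ^ 3)
    (𝓝[≠] (0:ℝ)) (𝓝 (S * (-(2/3)))) := by
  have h := (lim_sincos.const_mul S).add (lim_sq.const_mul C)
  have he : ∀ᶠ u in 𝓝[≠] (0:ℝ),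
      S * ((Real.sin u * Real.cos u - u) / u ^ 3) + C * ((u ^ 2 - Real.sin u ^ 2) / u ^ 3)
        = (S * (Real.sin u * Real.cos u - u) + C * (u ^ 2 - Real.sin u ^ 2)) / u ^ 3 := by
    filter_upwards with u; ring
  have h' := h.congr' he
  simpa using h'




lemma K2_continuous (σ : ℝ) (hσ : σ ≠ 0) : Continuous (K2 σ) := by
  rw [continuous_iff_continuousAt]
  intro v
  rcases eq_or_ne v 0 with rfl | hv
  · rw [ContinuousAt, ← nhdsNE_sup_pure, tendsto_sup]
    constructor
    · -- punctured limit
      have hmap : Tendsto (fun v : ℝ => σ * v) (𝓝[≠] (0:ℝ)) (𝓝[≠] (0:ℝ)) := by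
        rw [tendsto_nhdsWithin_iff]
        constructor
        · have : Tendsto (fun v : ℝ => σ * v) (𝓝 (0:ℝ)) (𝓝 (σ * 0)) := (continuous_const.mul continuous_id).tendsto 0
          simpa using this.mono_left nhdsWithin_le_nhds
        · filter_upwards [self_mem_nhdsWithin] with w hw
          simp only [Set.mem_compl_iff, Set.mem_singleton_iff]
          exact mul_ne_zero hσ hw
      have h := (lim_K2core.comp hmap).const_mul (2 * σ / Real.pi)
      have he : ∀ᶠ v in 𝓝[≠] (0:ℝ),
          2 * σ / Real.pi * ((fun w : ℝ => (Real.sin w - w * Real.cos w) / w ^ 3) ∘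
            (fun v : ℝ => σ * v)) v = K2 σ v := by
        filter_upwards [self_mem_nhdsWithin] with v hv
        have hv' : (v:ℝ) ≠ 0 := hv
        have hu : σ * v ≠ 0 := mul_ne_zero hσ hv'
        simp only [Function.comp_apply, K2, if_neg hv']
        rw [eq_div_iff (pow_ne_zero _ hu)]
        field_simp
      have h' := h.congr' he
      have : 2 * σ / Real.pi * (1/3) = K2 σ 0 := by
        simp [K2]; ring
      rwa [this] at h'
    · exact tendsto_pure_nhds _ _
  · -- v ≠ 0
    have hu : σ * v ≠ 0 := mul_ne_zero hσ hv
    have hopen : ∀ᶠ w in 𝓝 v, w ≠ 0 := by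
      exact eventually_ne_nhds hv
    have hcont : ContinuousAt (fun w =>
        (2 * σ / Real.pi) * (Real.sin (σ * w) / (σ * w) - Real.cos (σ * w)) / (σ * w) ^ 2) v := by
      apply ContinuousAt.div
      · apply ContinuousAt.mul continuousAt_const
        apply ContinuousAt.sub
        · exact ContinuousAt.div (Real.continuous_sin.comp (continuous_const.mul continuous_id)).continuousAt
            (continuous_const.mul continuous_id).continuousAt hu
        · exact (Real.continuous_cos.comp (continuous_const.mul continuous_id)).continuousAt
      · exact ((continuous_const.mul continuous_id).pow 2).continuousAt
      · exact pow_ne_zero _ hu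
    apply hcont.congr
    filter_upwards [hopen] with w hw
    simp [K2, if_neg hw]



noncomputable def Fant (σ t : ℝ) (s : ℝ) : ℝ :=
  if s = t then -Real.cos (σ * t) / Real.pi
  else (Real.sin (σ * (t - s)) * Real.sin (σ * s) / (σ * (t - s)) ^ 2
        - Real.sin (σ * t) / (σ * (t - s))) / Real.pi


lemma Fant_hasDerivAt (σ t : ℝ) (hσ : σ ≠ 0) (s : ℝ) :
    HasDerivAt (Fant σ t) (K2 σ (t - s) * Real.sin (σ * s)) s := by
  rcases eq_or_ne s t with rfl | hst
  · -- removable singularity point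
    rw [hasDerivAt_iff_tendsto_slope]
    set S := Real.sin (σ * s) with hS
    set C := Real.cos (σ * s) with hC
    have hmap : Tendsto (fun x : ℝ => σ * (s - x)) (𝓝[≠] s) (𝓝[≠] (0:ℝ)) := by
      rw [tendsto_nhdsWithin_iff]
      constructor
      · have : Tendsto (fun x : ℝ => σ * (s - x)) (𝓝 s) (𝓝 (σ * (s - s))) :=
          (continuous_const.mul (continuous_const.sub continuous_id)).tendsto s
        simpa using this.mono_left nhdsWithin_le_nhds
      · filter_upwards [self_mem_nhdsWithin] with x hx
        simp only [Set.mem_compl_iff, Set.mem_singleton_iff]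
        exact mul_ne_zero hσ (sub_ne_zero.mpr (Ne.symm hx))
    have h := ((lim_M S C).comp hmap).const_mul (-(σ / Real.pi))
    have he : ∀ᶠ x in 𝓝[≠] s,
        -(σ / Real.pi) * ((fun u : ℝ =>
          (S * (Real.sin u * Real.cos u - u) + C * (u ^ 2 - Real.sin u ^ 2)) / u ^ 3) ∘
          (fun x : ℝ => σ * (s - x))) x = slope (Fant σ s) s x := by
      filter_upwards [self_mem_nhdsWithin] with x hx
      have hx' : x ≠ s := hx
      have hxs : x - s ≠ 0 := sub_ne_zero.mpr hx'
      have hu : σ * (s - x) ≠ 0 := mul_ne_zero hσ (sub_ne_zero.mpr (Ne.symm hx'))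
      rw [slope_def_field]
      simp only [Function.comp_apply, Fant, if_neg hx', if_pos rfl, ↓reduceIte]
      have hsin : Real.sin (σ * x) = S * Real.cos (σ * (s - x)) - C * Real.sin (σ * (s - x)) := by
        have : σ * x = σ * s - σ * (s - x) := by ring
        rw [this, Real.sin_sub, hS, hC]
      rw [hsin]
      field_simp
      ring
    have h' := h.congr' he
    have hval : -(σ / Real.pi) * (S * (-(2/3))) = K2 σ (s - s) * Real.sin (σ * s) := by
      simp only [sub_self, K2, if_pos rfl, hS, ↓reduceIte]
      field_simp
    rwa [hval] at h'
  · -- s ≠ t : use explicit formula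
    have hts : t - s ≠ 0 := sub_ne_zero.mpr (Ne.symm hst)
    have hu : σ * (t - s) ≠ 0 := mul_ne_zero hσ hts
    have hu2 : (σ * (t - s)) ^ 2 ≠ 0 := pow_ne_zero _ hu
    have hud : HasDerivAt (fun x : ℝ => σ * (t - x)) (-σ) s := by
      have : HasDerivAt (fun x : ℝ => σ * t - σ * x) (-σ) s := by
        simpa using ((hasDerivAt_id s).const_mul σ).const_sub (σ * t)
      convert this using 2 with x
      ring
    have h1 : HasDerivAt (fun x => Real.sin (σ * (t - x)))
        (Real.cos (σ * (t - s)) * (-σ)) s := (Real.hasDerivAt_sin _).comp s hud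
    have h2 : HasDerivAt (fun x => Real.sin (σ * x)) (Real.cos (σ * s) * σ) s := by
      have hm : HasDerivAt (fun x : ℝ => σ * x) σ s := by
        simpa using (hasDerivAt_id s).const_mul σ
      exact (Real.hasDerivAt_sin _).comp s hm
    have h3 : HasDerivAt (fun x : ℝ => (σ * (t - x)) ^ 2)
        (2 * (σ * (t - s)) * (-σ)) s := by
      have := hud.fun_pow 2
      simpa using this
    have hnum := h1.mul h2
    have hfrac := hnum.div h3 hu2
    have h5 : HasDerivAt (fun x => Real.sin (σ * t) / (σ * (t - x)))
        ((0 * (σ * (t - s)) - Real.sin (σ * t) * (-σ)) / (σ * (t - s)) ^ 2) s :=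
      (hasDerivAt_const s (Real.sin (σ * t))).div hud hu
    have hφ := (hfrac.sub h5).div_const Real.pi
    have heq : Fant σ t =ᶠ[𝓝 s] (fun x =>
        (Real.sin (σ * (t - x)) * Real.sin (σ * x) / (σ * (t - x)) ^ 2
          - Real.sin (σ * t) / (σ * (t - x))) / Real.pi) := by
      filter_upwards [eventually_ne_nhds hst] with x hx
      simp [Fant, if_neg hx]
    have hfin := hφ.congr_of_eventuallyEq heq
    refine hfin.congr_deriv (Eq.symm ?_)
    have hsin : Real.sin (σ * t)
        = Real.sin (σ * (t - s)) * Real.cos (σ * s) + Real.cos (σ * (t - s)) * Real.sin (σ * s) := by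
      have h' : σ * t = σ * (t - s) + σ * s := by ring
      rw [h', Real.sin_add]
    simp only [K2, if_neg hts, Pi.mul_apply]
    rw [hsin]
    field_simp
    ring


theorem K2_sine_image (ν : ℕ) (hν : 0 < ν) (t : ℝ) (ht1 : t ≠ 1) (ht2 : t ≠ -1) :
    ∫ s in (-1:ℝ)..1, K2 ((ν : ℝ) * Real.pi) (t - s) * Real.sin ((ν : ℝ) * Real.pi * s)
      = 2 * Real.sin ((ν : ℝ) * Real.pi * t) / ((ν : ℝ) * Real.pi ^ 2 * (1 - t ^ 2)) := by
  set σ : ℝ := (ν : ℝ) * Real.pi with hσdef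
  have hν' : (ν : ℝ) ≠ 0 := Nat.cast_ne_zero.mpr hν.ne'
  have hσ : σ ≠ 0 := mul_ne_zero hν' Real.pi_ne_zero
  have hcont : Continuous fun s => K2 σ (t - s) * Real.sin (σ * s) :=
    ((K2_continuous σ hσ).comp (continuous_const.sub continuous_id)).mul
      (Real.continuous_sin.comp (continuous_const.mul continuous_id))
  rw [intervalIntegral.integral_eq_sub_of_hasDerivAt
    (fun x _ => Fant_hasDerivAt σ t hσ x) (hcont.intervalIntegrable _ _)]
  have h1t : (1:ℝ) ≠ t := fun h => ht1 h.symm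
  have hm1t : (-1:ℝ) ≠ t := fun h => ht2 h.symm
  have hs1 : Real.sin (σ * 1) = 0 := by
    rw [mul_one, hσdef]; exact Real.sin_nat_mul_pi ν
  have hsm1 : Real.sin (σ * (-1)) = 0 := by
    have : σ * (-1) = -(σ * 1) := by ring
    rw [this, Real.sin_neg, hs1, neg_zero]
  rw [Fant, Fant, if_neg h1t, if_neg hm1t, hs1, hsm1]
  have ht1' : t - 1 ≠ 0 := sub_ne_zero.mpr ht1
  have ht2' : t + 1 ≠ 0 := by
    intro h; exact ht2 (by linarith)
  have h1mt : 1 - t ^ 2 ≠ 0 := by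
    intro h
    have : (1 - t) * (1 + t) = 0 := by ring_nf; linarith [h]
    rcases mul_eq_zero.mp this with h' | h'
    · exact ht1 (by linarith)
    · exact ht2 (by linarith)
  rw [hσdef]
  field_simp
  ring
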